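/- Let A be a GFA over a set E of event signatures such that every constant mentioned in a guard of A belongs to the finite set C. Then a trace σ over E is accepted by A if and only if the abstract trace σ^{P_C}, obtained by replacing each attribute value by the unique region of P_C containing it, is accepted by A under region-level guard evaluation. In particular, acceptance of arbitrary (real-valued) traces by A is decided by a finite-state automaton over the finite alphabet of abstract events. -/
import Mathlib


/-- The region partition `P_C` induced by the sorted constants `c 0 < c 1 < ... < c (m-1)`. -/
def regionPartition {m : ℕ} (hm : 0 < m) (c : Fin m → ℝ) : Set (Set ℝ) :=
  {S | S = Set.Iio (c ⟨0, hm⟩) ∨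
       S = Set.Ioi (c ⟨m - 1, Nat.sub_lt hm Nat.one_pos⟩) ∨
       (∃ i : Fin m, S = Set.Icc (c i) (c i)) ∨
       (∃ i : Fin m, ∃ h : (i : ℕ) + 1 < m, S = Set.Ioo (c i) (c ⟨(i : ℕ) + 1, h⟩))}

/-- Conditions over event names `N` and attributes `A`. -/
inductive Cond (N A : Type) : Type where
  | name : N → Cond N A
  | lt : A → ℝ → Cond N A
  | eq : A → ℝ → Cond N A
  | gt : A → ℝ → Cond N A
  | neg : Cond N A → Cond N A
  | conj : Cond N A → Cond N A → Cond N A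

/-- Satisfaction of a condition by a (concrete) event `⟨n, ν⟩`. -/
def csat {N A : Type} (n : N) (ν : A → ℝ) : Cond N A → Prop
  | .name x => x = n
  | .lt a k => ν a < k
  | .eq a k => ν a = k
  | .gt a k => ν a > k
  | .neg φ => ¬ csat n ν φ
  | .conj φ ψ => csat n ν φ ∧ csat n ν ψ

/-- Region-level satisfaction of a condition by an abstract event `⟨n, ρ⟩` whose
attribute values are regions: atomic comparisons are evaluated region-wise. -/
def asat {N A : Type} (n : N) (ρ : A → Set ℝ) : Cond N A → Prop
  | .name x => x = n
  | .lt a k => ∀ x ∈ ρ a, x < k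
  | .eq a k => ∀ x ∈ ρ a, x = k
  | .gt a k => ∀ x ∈ ρ a, x > k
  | .neg φ => ¬ asat n ρ φ
  | .conj φ ψ => asat n ρ φ ∧ asat n ρ ψ

/-- The set of constants mentioned in a condition. -/
def Cond.consts {N A : Type} : Cond N A → Set ℝ
  | .name _ => ∅
  | .lt _ k => {k}
  | .eq _ k => {k}
  | .gt _ k => {k}
  | .neg φ => φ.consts
  | .conj φ ψ => φ.consts ∪ ψ.consts

/-- A guarded finite-state automaton over states `Q`, event names `N` and
attributes `A`: an initial state, a condition-labeled transition relation and a set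
of final states. -/
structure GFA (Q N A : Type) where
  init : Q
  trans : Q → Cond N A → Q → Prop
  final : Q → Prop

/-- Acceptance of a (concrete) trace from a state of the GFA. -/
inductive GAccepts {Q N A : Type} (G : GFA Q N A) : Q → List (N × (A → ℝ)) → Prop
  | nil {q} : G.final q → GAccepts G q []
  | cons {q φ q' n ν σ} : G.trans q φ q' → csat n ν φ →
      GAccepts G q' σ → GAccepts G q ((n, ν) :: σ)

/-- Acceptance of an abstract (region-valued) trace under region-level guard
evaluation. -/
inductive GAAccepts {Q N A : Type} (G : GFA Q N A) : Q → List (N × (A → Set ℝ)) → Prop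
  | nil {q} : G.final q → GAAccepts G q []
  | cons {q φ q' n ρ σ} : G.trans q φ q' → asat n ρ φ →
      GAAccepts G q' σ → GAAccepts G q ((n, ρ) :: σ)

/-- The set of constants mentioned in some guard of the GFA. -/
def GFA.consts {Q N A : Type} (G : GFA Q N A) : Set ℝ :=
  {k | ∃ q φ q', G.trans q φ q' ∧ k ∈ Cond.consts φ}

/-- `σa` is the abstract trace `σ^{P_C}` of `σ`: same names, and every attribute value
is replaced by the (unique) region of `P_C` containing it. -/
def AbstractsTrace {N A : Type} {m : ℕ} (hm : 0 < m) (c : Fin m → ℝ)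
    (σ : List (N × (A → ℝ))) (σa : List (N × (A → Set ℝ))) : Prop :=
  List.Forall₂
    (fun e ea => e.1 = ea.1 ∧
      ∀ a : A, ea.2 a ∈ regionPartition hm c ∧ e.2 a ∈ ea.2 a) σ σa

/-- Regions are homogeneous for comparisons against constants of `C`. -/
lemma region_homog {m : ℕ} (hm : 0 < m) {c : Fin m → ℝ} (hc : StrictMono c)
    {R : Set ℝ} (hR : R ∈ regionPartition hm c) {x y : ℝ} (hx : x ∈ R) (hy : y ∈ R)
    (j : Fin m) :
    (x < c j ↔ y < c j) ∧ (x = c j ↔ y = c j) ∧ (x > c j ↔ y > c j) := by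
  have hmono := hc.monotone
  rcases hR with h | h | ⟨i, h⟩ | ⟨i, hi, h⟩
  · subst h
    have h0j : c ⟨0, hm⟩ ≤ c j := hmono (by rw [Fin.le_def]; exact Nat.zero_le _)
    have hx' : x < c j := lt_of_lt_of_le hx h0j
    have hy' : y < c j := lt_of_lt_of_le hy h0j
    exact ⟨iff_of_true hx' hy',
      iff_of_false (ne_of_lt hx') (ne_of_lt hy'),
      iff_of_false (not_lt_of_gt hx') (not_lt_of_gt hy')⟩
  · subst h
    have hjl : c j ≤ c ⟨m - 1, Nat.sub_lt hm Nat.one_pos⟩ :=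
      hmono (by rw [Fin.le_def]; exact Nat.le_pred_of_lt j.isLt)
    have hx' : c j < x := lt_of_le_of_lt hjl hx
    have hy' : c j < y := lt_of_le_of_lt hjl hy
    exact ⟨iff_of_false (not_lt_of_gt hx') (not_lt_of_gt hy'),
      iff_of_false (ne_of_gt hx') (ne_of_gt hy'),
      iff_of_true hx' hy'⟩
  · subst h
    simp only [Set.mem_Icc] at hx hy
    have : x = y := le_antisymm (hx.2.trans hy.1) (hy.2.trans hx.1)
    exact ⟨by rw [this], by rw [this], by rw [this]⟩
  · subst h
    simp only [Set.mem_Ioo] at hx hy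
    rcases le_or_gt (j : ℕ) (i : ℕ) with hji | hij
    · have hle : c j ≤ c i := hmono (by rw [Fin.le_def]; exact hji)
      have hx' : c j < x := lt_of_le_of_lt hle hx.1
      have hy' : c j < y := lt_of_le_of_lt hle hy.1
      exact ⟨iff_of_false (not_lt_of_gt hx') (not_lt_of_gt hy'),
        iff_of_false (ne_of_gt hx') (ne_of_gt hy'),
        iff_of_true hx' hy'⟩
    · have hle : c ⟨(i : ℕ) + 1, hi⟩ ≤ c j := hmono (by rw [Fin.le_def]; exact hij)
      have hx' : x < c j := lt_of_lt_of_le hx.2 hle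
      have hy' : y < c j := lt_of_lt_of_le hy.2 hle
      exact ⟨iff_of_true hx' hy',
        iff_of_false (ne_of_lt hx') (ne_of_lt hy'),
        iff_of_false (not_lt_of_gt hx') (not_lt_of_gt hy')⟩

lemma sat_iff_asat {N A : Type} {m : ℕ} (hm : 0 < m) {c : Fin m → ℝ}
    (hc : StrictMono c) (n : N) (ν : A → ℝ) (ρ : A → Set ℝ)
    (h : ∀ a, ρ a ∈ regionPartition hm c ∧ ν a ∈ ρ a) :
    ∀ φ : Cond N A, Cond.consts φ ⊆ Set.range c → (csat n ν φ ↔ asat n ρ φ) := by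
  intro φ
  induction φ with
  | name x => intro _; exact Iff.rfl
  | lt a k =>
    intro hk
    obtain ⟨j, rfl⟩ := hk rfl
    obtain ⟨hRa, hνa⟩ := h a
    constructor
    · intro hlt x hxρ
      exact (region_homog hm hc hRa hxρ hνa j).1.mpr hlt
    · intro hall; exact hall _ hνa
  | eq a k =>
    intro hk
    obtain ⟨j, rfl⟩ := hk rfl
    obtain ⟨hRa, hνa⟩ := h a
    constructor
    · intro heq x hxρ
      exact (region_homog hm hc hRa hxρ hνa j).2.1.mpr heq
    · intro hall; exact hall _ hνa
  | gt a k =>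
    intro hk
    obtain ⟨j, rfl⟩ := hk rfl
    obtain ⟨hRa, hνa⟩ := h a
    constructor
    · intro hgt x hxρ
      exact (region_homog hm hc hRa hxρ hνa j).2.2.mpr hgt
    · intro hall; exact hall _ hνa
  | neg φ ih =>
    intro hk
    have := ih (fun k hk' => hk hk')
    exact not_congr this
  | conj φ ψ ihφ ihψ =>
    intro hk
    have h1 := ihφ (fun k hk' => hk (Or.inl hk'))
    have h2 := ihψ (fun k hk' => hk (Or.inr hk'))
    exact and_congr h1 h2

lemma regionPartition_finite {m : ℕ} (hm : 0 < m) (c : Fin m → ℝ) :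
    (regionPartition hm c).Finite := by
  have hsub : regionPartition hm c ⊆
      insert (Set.Iio (c ⟨0, hm⟩))
        (insert (Set.Ioi (c ⟨m - 1, Nat.sub_lt hm Nat.one_pos⟩))
          ((⋃ i : Fin m, {Set.Icc (c i) (c i)}) ∪
           (⋃ i : Fin m, ⋃ j : Fin m, {Set.Ioo (c i) (c j)}))) := by
    rintro S (rfl | rfl | ⟨i, rfl⟩ | ⟨i, hi, rfl⟩)
    · exact Set.mem_insert _ _
    · exact Set.mem_insert_of_mem _ (Set.mem_insert _ _)
    · exact Set.mem_insert_of_mem _ (Set.mem_insert_of_mem _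
        (Or.inl (Set.mem_iUnion.mpr ⟨i, rfl⟩)))
    · exact Set.mem_insert_of_mem _ (Set.mem_insert_of_mem _
        (Or.inr (Set.mem_iUnion.mpr ⟨i, Set.mem_iUnion.mpr ⟨⟨(i : ℕ) + 1, hi⟩, rfl⟩⟩)))
  refine Set.Finite.subset ?_ hsub
  apply Set.Finite.insert
  apply Set.Finite.insert
  apply Set.Finite.union
  · exact Set.finite_iUnion fun i => Set.finite_singleton _
  · exact Set.finite_iUnion fun i => Set.finite_iUnion fun j => Set.finite_singleton _

/-- if every constant mentioned in a guard of the GFA `A` belongs to the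
finite set `C`, then a trace `σ` is accepted by `A` iff its abstract trace `σ^{P_C}`
is accepted by `A` under region-level guard evaluation.  In particular (the abstract
alphabet being finite for finite `N` and `A`), acceptance of arbitrary real-valued
traces is decided by a finite-state automaton over the finite alphabet of abstract
events. -/
theorem acceptance_iff_abstract_acceptance {m : ℕ} (hm : 0 < m) (c : Fin m → ℝ)
    (hc : StrictMono c) {Q N A : Type} [Finite N] [Finite A]
    (G : GFA Q N A) (hconsts : G.consts ⊆ Set.range c) :
    (∀ (σ : List (N × (A → ℝ))) (σa : List (N × (A → Set ℝ))),
      AbstractsTrace hm c σ σa →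
      (GAccepts G G.init σ ↔ GAAccepts G G.init σa)) ∧
    Finite (N × (A → {R : Set ℝ // R ∈ regionPartition hm c})) := by
  constructor
  · have main : ∀ (σ : List (N × (A → ℝ))) (σa : List (N × (A → Set ℝ))),
        AbstractsTrace hm c σ σa → ∀ q, (GAccepts G q σ ↔ GAAccepts G q σa) := by
      intro σ σa hab
      induction hab with
      | nil =>
        intro q
        constructor
        · rintro h; cases h with | nil hf => exact .nil hf
        · rintro h; cases h with | nil hf => exact .nil hf
      | @cons e ea l₁ l₂ hpair _ ih =>
        intro q
        obtain ⟨n, ν⟩ := e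
        obtain ⟨n', ρ⟩ := ea
        obtain ⟨hn, hv⟩ := hpair
        simp only at hn hv
        subst hn
        constructor
        · intro hacc
          cases hacc with
          | @cons _ φ q' _ _ _ ht hsat hrest =>
            refine .cons ht ?_ ((ih q').mp hrest)
            have hφ : Cond.consts φ ⊆ Set.range c :=
              fun k hk => hconsts ⟨q, φ, q', ht, hk⟩
            exact (sat_iff_asat hm hc n ν ρ hv φ hφ).mp hsat
        · intro hacc
          cases hacc with
          | @cons _ φ q' _ _ _ ht hsat hrest =>
            refine .cons ht ?_ ((ih q').mpr hrest)
            have hφ : Cond.consts φ ⊆ Set.range c :=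
              fun k hk => hconsts ⟨q, φ, q', ht, hk⟩
            exact (sat_iff_asat hm hc n ν ρ hv φ hφ).mpr hsat
    exact fun σ σa hab => main σ σa hab G.init
  · haveI : Finite {R : Set ℝ // R ∈ regionPartition hm c} :=
      (regionPartition_finite hm c).to_subtype
    infer_instance
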